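/- arXiv:1309.7130 — 2 statements merged into one kernel-verified Lean document; each statement's English description precedes it below -/
import Mathlib

section
/- There exists a continuous function ω : ℝ → [0,1] with logarithmic integral 𝓛(ω) = ∫_ℝ log ω(x)/(1+x²) dx > −∞ which is not a Beurling–Malliavin majorant; in fact, for every σ > 0, the only entire function F with |F(z)| ≤ C_F e^{σ|z|} for all z ∈ ℂ, F|_ℝ ∈ L²(ℝ) and |F(x)| ≤ ω(x) for all x ∈ ℝ is F ≡ 0. Such an ω can be obtained by taking ω(t) = 2|t − √n|/|I_n| on pairwise disjoint intervals I_n centered at √n with Σ_n |I_n| < ∞, and ω(t) = 1 elsewhere. -/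
open MeasureTheory Filter Topology Complex Set

-- factor out a single zero
lemma factor_one {F : ℂ → ℂ} (hF : Differentiable ℂ F) {c : ℂ} (hc : F c = 0) :
    ∃ G : ℂ → ℂ, Differentiable ℂ G ∧ ∀ z, F z = (z - c) * G z := by
  refine ⟨dslope F c, ?_, ?_⟩
  · rw [← differentiableOn_univ] at hF ⊢
    exact (differentiableOn_dslope (by simp)).mpr hF
  · intro z
    have h := sub_smul_dslope F c z
    rw [hc, sub_zero] at h
    rw [← h]; simp [smul_eq_mul]

lemma factor_many {F : ℂ → ℂ} (hF : Differentiable ℂ F)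
    (hz : ∀ n : ℕ, F (Real.sqrt (n + 1)) = 0) (N : ℕ) :
    ∃ G : ℂ → ℂ, Differentiable ℂ G ∧
      ∀ z, F z = (∏ n ∈ Finset.range N, (z - (Real.sqrt (n + 1) : ℝ))) * G z := by
  induction N with
  | zero => exact ⟨F, hF, by simp⟩
  | succ N ih =>
    obtain ⟨G, hG, hFG⟩ := ih
    have hGz : G ((Real.sqrt (N + 1) : ℝ)) = 0 := by
      have h := hFG ((Real.sqrt (N + 1) : ℝ))
      rw [hz N] at h
      have hne : (∏ n ∈ Finset.range N, (((Real.sqrt (N + 1) : ℝ) : ℂ) - (Real.sqrt (n + 1) : ℝ))) ≠ 0 := by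
        rw [Finset.prod_ne_zero_iff]
        intro n hn
        rw [sub_ne_zero]
        intro hcontra
        have : Real.sqrt (N + 1) = Real.sqrt (n + 1) := by exact_mod_cast hcontra
        have hNn : (n : ℝ) + 1 < (N : ℝ) + 1 := by
          have h2 := Finset.mem_range.mp hn
          have : (n:ℝ) < N := by exact_mod_cast h2
          linarith
        have hlt := Real.sqrt_lt_sqrt (by positivity) hNn
        rw [this] at hlt; exact lt_irrefl _ hlt
      have := mul_eq_zero.mp h.symm
      tauto
    obtain ⟨G', hG', hGG'⟩ := factor_one hG hGz
    refine ⟨G', hG', fun z => ?_⟩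
    rw [hFG z, hGG' z, Finset.prod_range_succ]
    ring

-- Main kill lemma: entire of exponential type vanishing at all √(n+1) is zero.
lemma kill_lemma {F : ℂ → ℂ} (hF : Differentiable ℂ F) {σ C : ℝ}
    (hC : ∀ z : ℂ, ‖F z‖ ≤ C * Real.exp (σ * ‖z‖))
    (hz : ∀ n : ℕ, F (Real.sqrt (n + 1)) = 0) : ∀ z, F z = 0 := by
  intro z₀
  rw [← norm_eq_zero]
  have hC0 : 0 ≤ C := by
    have := hC 0
    have := norm_nonneg (F 0)
    nlinarith [Real.exp_pos (σ * ‖(0:ℂ)‖)]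
  -- it suffices to show ‖F z₀‖ ≤ C * (1/2)^N for large N
  have key : ∀ᶠ N : ℕ in atTop, ‖F z₀‖ ≤ C * (1/2 : ℝ) ^ N := by
    filter_upwards [eventually_ge_atTop 4,
      eventually_ge_atTop (Nat.ceil (‖z₀‖ ^ 2)),
      eventually_ge_atTop (Nat.ceil (64 * Real.exp σ ^ 2))] with N h4 hz₀ hσN
    have hN4 : (4 : ℝ) ≤ N := by exact_mod_cast h4
    have hNpos : (0 : ℝ) < N := by linarith
    have hsqrtN : Real.sqrt N ≤ (N : ℝ) / 2 := by
      rw [show (N:ℝ)/2 = Real.sqrt (((N:ℝ)/2)^2) by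
        rw [Real.sqrt_sq (by positivity)]]
      apply Real.sqrt_le_sqrt
      nlinarith
    have hz₀N : ‖z₀‖ ≤ Real.sqrt N := by
      have : ‖z₀‖ ^ 2 ≤ (N : ℝ) := le_trans (Nat.le_ceil _) (by exact_mod_cast hz₀)
      calc ‖z₀‖ = Real.sqrt (‖z₀‖ ^ 2) := by rw [Real.sqrt_sq (norm_nonneg _)]
        _ ≤ Real.sqrt N := Real.sqrt_le_sqrt this
    obtain ⟨G, hG, hFG⟩ := factor_many hF hz N
    -- bound on the sphere of radius N
    have hGsphere : ∀ w : ℂ, ‖w‖ = (N : ℝ) →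
        ‖G w‖ ≤ C * Real.exp (σ * N) * ((2 : ℝ) / N) ^ N := by
      intro w hw
      have hfac : ∀ n ∈ Finset.range N, (N : ℝ) / 2 ≤ ‖w - ((Real.sqrt (n+1) : ℝ) : ℂ)‖ := by
        intro n hn
        have hn' : (n : ℝ) + 1 ≤ (N : ℝ) := by
          have := Finset.mem_range.mp hn
          exact_mod_cast Nat.succ_le_of_lt this
        have h1 : Real.sqrt ((n : ℝ) + 1) ≤ Real.sqrt N := Real.sqrt_le_sqrt hn'
        have h2 : ‖w‖ - ‖(((Real.sqrt (n+1) : ℝ)) : ℂ)‖ ≤ ‖w - ((Real.sqrt (n+1) : ℝ) : ℂ)‖ :=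
          norm_sub_norm_le _ _
        have h3 : ‖(((Real.sqrt (n+1) : ℝ)) : ℂ)‖ = Real.sqrt ((n:ℝ)+1) := by
          rw [Complex.norm_real, Real.norm_eq_abs, _root_.abs_of_nonneg (Real.sqrt_nonneg _)]
        rw [h3, hw] at h2
        linarith [hsqrtN, h1]
      have hprod : ((N : ℝ) / 2) ^ N ≤ ‖∏ n ∈ Finset.range N, (w - ((Real.sqrt (n+1) : ℝ) : ℂ))‖ := by
        rw [norm_prod]
        calc ((N : ℝ)/2) ^ N = ∏ _n ∈ Finset.range N, ((N:ℝ)/2) := by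
              rw [Finset.prod_const, Finset.card_range]
          _ ≤ _ := Finset.prod_le_prod (fun _ _ => by positivity) hfac
      have hFw : ‖F w‖ ≤ C * Real.exp (σ * N) := by
        have := hC w; rw [hw] at this; exact this
      have hGw : ‖G w‖ * ((N:ℝ)/2) ^ N ≤ C * Real.exp (σ * N) := by
        calc ‖G w‖ * ((N:ℝ)/2)^N ≤ ‖G w‖ * ‖∏ n ∈ Finset.range N, (w - ((Real.sqrt (n+1) : ℝ) : ℂ))‖ := by
              apply mul_le_mul_of_nonneg_left hprod (norm_nonneg _)
          _ = ‖F w‖ := by rw [hFG w, norm_mul]; ring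
          _ ≤ C * Real.exp (σ * N) := hFw
      have hpow : (0:ℝ) < ((N:ℝ)/2)^N := by positivity
      rw [show C * Real.exp (σ * N) * ((2:ℝ)/N)^N = (C * Real.exp (σ * N)) / ((N:ℝ)/2)^N by
        rw [div_pow]; field_simp; rw [mul_assoc, ← mul_pow]; ring_nf]
      rw [le_div_iff₀ hpow]
      exact hGw
    -- maximum modulus
    have hGz₀ : ‖G z₀‖ ≤ C * Real.exp (σ * N) * ((2 : ℝ) / N) ^ N := by
      have hNne : (N : ℝ) ≠ 0 := ne_of_gt hNpos
      apply Complex.norm_le_of_forall_mem_frontier_norm_le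
        (Metric.isBounded_ball (x := (0:ℂ)) (r := (N:ℝ))) hG.diffContOnCl
      · intro w hw
        rw [frontier_ball (0:ℂ) hNne] at hw
        have : ‖w‖ = (N : ℝ) := by simpa [Complex.dist_eq] using hw
        exact hGsphere w this
      · rw [closure_ball (0:ℂ) hNne]
        simp only [Metric.mem_closedBall, Complex.dist_eq, sub_zero]
        calc ‖z₀‖ = ‖z₀‖ := rfl
          _ ≤ Real.sqrt N := hz₀N
          _ ≤ (N:ℝ)/2 := hsqrtN
          _ ≤ (N:ℝ) := by linarith
    -- combine
    have hprod₀ : ‖∏ n ∈ Finset.range N, (z₀ - ((Real.sqrt (n+1) : ℝ) : ℂ))‖ ≤ (2 * Real.sqrt N) ^ N := by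
      rw [norm_prod]
      calc (∏ n ∈ Finset.range N, ‖z₀ - ((Real.sqrt (n+1) : ℝ) : ℂ)‖)
          ≤ ∏ _n ∈ Finset.range N, (2 * Real.sqrt N) := by
            apply Finset.prod_le_prod (fun _ _ => norm_nonneg _)
            intro n hn
            have hn' : (n : ℝ) + 1 ≤ (N : ℝ) := by
              have := Finset.mem_range.mp hn
              exact_mod_cast Nat.succ_le_of_lt this
            have h1 : Real.sqrt ((n : ℝ) + 1) ≤ Real.sqrt N := Real.sqrt_le_sqrt hn'
            calc ‖z₀ - ((Real.sqrt (n+1) : ℝ) : ℂ)‖ ≤ ‖z₀‖ + ‖(((Real.sqrt (n+1) : ℝ)) : ℂ)‖ :=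
                  norm_sub_le _ _
              _ ≤ Real.sqrt N + Real.sqrt N := by
                  apply add_le_add hz₀N
                  rw [Complex.norm_real, Real.norm_eq_abs, _root_.abs_of_nonneg (Real.sqrt_nonneg _)]
                  exact_mod_cast h1
              _ = 2 * Real.sqrt N := by ring
        _ = (2 * Real.sqrt N) ^ N := by rw [Finset.prod_const, Finset.card_range]
    have hFz₀ : ‖F z₀‖ ≤ (2 * Real.sqrt N)^N * (C * Real.exp (σ * N) * ((2:ℝ)/N)^N) := by
      rw [hFG z₀, norm_mul]
      apply mul_le_mul hprod₀ hGz₀ (norm_nonneg _) (by positivity)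
    -- now the numeric estimate
    have hsig : Real.sqrt N * (4 * Real.exp σ) ≤ Real.sqrt N * Real.sqrt N * (1/2) := by
      have h64 : 64 * Real.exp σ ^ 2 ≤ (N : ℝ) := le_trans (Nat.le_ceil _) (by exact_mod_cast hσN)
      have hsq : Real.sqrt N * Real.sqrt N = (N : ℝ) := Real.mul_self_sqrt (by positivity)
      have h8 : 8 * Real.exp σ ≤ Real.sqrt N := by
        rw [show (8:ℝ) * Real.exp σ = Real.sqrt ((8 * Real.exp σ)^2) by
          rw [Real.sqrt_sq (by positivity)]]
        apply Real.sqrt_le_sqrt; nlinarith [Real.exp_pos σ]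
      nlinarith [Real.sqrt_nonneg (N:ℝ), Real.exp_pos σ]
    calc ‖F z₀‖ ≤ (2 * Real.sqrt N)^N * (C * Real.exp (σ * N) * ((2:ℝ)/N)^N) := hFz₀
      _ = C * ((2 * Real.sqrt N) * Real.exp σ * (2 / N)) ^ N := by
          have hexp : Real.exp (σ * N) = (Real.exp σ)^N := by
            rw [← Real.exp_nat_mul]; ring_nf
          rw [hexp, mul_pow, mul_pow, mul_pow]; ring
      _ ≤ C * (1/2:ℝ)^N := by
          apply mul_le_mul_of_nonneg_left _ hC0
          apply pow_le_pow_left₀ _ _ N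
          · positivity
          · have hsq : Real.sqrt N * Real.sqrt N = (N : ℝ) := Real.mul_self_sqrt (by positivity)
            have heq : 2 * Real.sqrt N * Real.exp σ * (2 / N) = (Real.sqrt N * (4 * Real.exp σ)) / N := by
              field_simp; ring
            rw [heq, div_le_iff₀ hNpos]
            nlinarith [hsig]
  have hlim : Tendsto (fun N : ℕ => C * (1/2 : ℝ)^N) atTop (𝓝 0) := by
    rw [show (0:ℝ) = C * 0 by ring]
    exact (tendsto_pow_atTop_nhds_zero_of_lt_one (by norm_num) (by norm_num)).const_mul C
  exact le_antisymm (ge_of_tendsto hlim key) (norm_nonneg _)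

noncomputable def ll : ℕ → ℝ := fun k => (1/8) * (1/2)^k

lemma ll_pos (k : ℕ) : 0 < ll k := by unfold ll; positivity

lemma ll_le (k : ℕ) : ll k ≤ 1/8 := by
  unfold ll
  have : ((1:ℝ)/2)^k ≤ 1 := pow_le_one₀ (by norm_num) (by norm_num)
  nlinarith

lemma ll_anti {j k : ℕ} (h : j ≤ k) : ll k ≤ ll j := by
  unfold ll
  have := pow_le_pow_of_le_one (by norm_num : (0:ℝ) ≤ 1/2) (by norm_num) h
  nlinarith

lemma sqrt_add_ll_lt (m : ℕ) :
    Real.sqrt (m + 1) + ll (m + 1) < Real.sqrt (m + 2) := by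
  have h0 : (0:ℝ) ≤ Real.sqrt (m+1) + ll (m+1) :=
    add_nonneg (Real.sqrt_nonneg _) (ll_pos _).le
  rw [show ((m:ℝ) + 2) = ((m:ℝ)+1) + 1 by ring, Real.lt_sqrt h0]
  have hsq : Real.sqrt ((m:ℝ)+1) ^ 2 = (m:ℝ)+1 := Real.sq_sqrt (by positivity)
  have hs2 : Real.sqrt ((m:ℝ)+1) ≤ 2^(m+1) := by
    have h1 : Real.sqrt ((m:ℝ)+1) ≤ (m:ℝ)+1 := by
      have h1' : Real.sqrt ((m:ℝ)+1) ≤ Real.sqrt (((m:ℝ)+1)^2) :=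
        Real.sqrt_le_sqrt (by nlinarith [Nat.cast_nonneg (α := ℝ) m])
      rwa [Real.sqrt_sq (by positivity)] at h1'
    have h2 : ((m:ℝ)+1) ≤ 2^(m+1) := by
      have := Nat.lt_two_pow_self (n := m+1)
      have : ((m:ℕ)+1 : ℝ) < (2:ℝ)^(m+1) := by exact_mod_cast this
      push_cast at this ⊢; linarith
    linarith
  have hδ : ll (m+1) * 2^(m+1) = 1/8 := by
    unfold ll
    have : ((1:ℝ)/2)^(m+1) * 2^(m+1) = 1 := by
      rw [div_pow, one_pow]; field_simp
    nlinarith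
  have hδle : ll (m+1) ≤ 1/8 := ll_le _
  have hδpos := ll_pos (m+1)
  have h2p : (0:ℝ) < 2^(m+1) := by positivity
  nlinarith [mul_le_mul_of_nonneg_left hs2 hδpos.le, hsq, hδ, hδle, hδpos,
    Real.sqrt_nonneg ((m:ℝ)+1)]

lemma gap_lemma {m n : ℕ} (h : m < n) :
    Real.sqrt (m + 1) + ll (m + 1) / 2 < Real.sqrt (n + 1) - ll (n + 1) / 2 := by
  have h1 : ll (n+1) ≤ ll (m+1) := ll_anti (by omega)
  have h2 : Real.sqrt (m + 2) ≤ Real.sqrt (n + 1) := by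
    apply Real.sqrt_le_sqrt
    have : (m:ℝ) + 1 ≤ (n:ℝ) := by exact_mod_cast Nat.succ_le_of_lt h
    linarith
  have := sqrt_add_ll_lt m
  linarith

lemma intervals_disjoint : Pairwise fun m n : ℕ =>
    Disjoint (Set.Icc (Real.sqrt (m + 1) - ll (m + 1) / 2) (Real.sqrt (m + 1) + ll (m + 1) / 2))
      (Set.Icc (Real.sqrt (n + 1) - ll (n + 1) / 2) (Real.sqrt (n + 1) + ll (n + 1) / 2)) := by
  have key : ∀ m n : ℕ, m < n →
      Disjoint (Set.Icc (Real.sqrt (m + 1) - ll (m + 1) / 2) (Real.sqrt (m + 1) + ll (m + 1) / 2))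
      (Set.Icc (Real.sqrt (n + 1) - ll (n + 1) / 2) (Real.sqrt (n + 1) + ll (n + 1) / 2)) := by
    intro m n hmn
    rw [Set.disjoint_left]
    rintro x ⟨_, hx2⟩ ⟨hx3, _⟩
    have := gap_lemma hmn
    push_cast at *
    linarith
  intro m n hmn
  rcases lt_or_gt_of_ne hmn with h | h
  · exact key m n h
  · exact (key n m h).symm

noncomputable def rr (n : ℕ) (t : ℝ) : ℝ := 2 * |t - Real.sqrt (n + 1)| / ll (n + 1)

noncomputable def om (t : ℝ) : ℝ := min 1 (⨅ n, rr n t)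

def II (n : ℕ) : Set ℝ :=
  Set.Icc (Real.sqrt (n + 1) - ll (n + 1) / 2) (Real.sqrt (n + 1) + ll (n + 1) / 2)

lemma rr_nonneg (n : ℕ) (t : ℝ) : 0 ≤ rr n t := by
  unfold rr
  have := ll_pos (n+1)
  positivity

lemma rr_bdd (t : ℝ) : BddBelow (Set.range fun n => rr n t) :=
  ⟨0, by rintro x ⟨n, rfl⟩; exact rr_nonneg n t⟩

lemma rr_continuous (n : ℕ) : Continuous (rr n) := by
  unfold rr
  exact (continuous_const.mul ((continuous_id.sub continuous_const).abs)).div_const _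

lemma rr_le_one_of_mem {n : ℕ} {t : ℝ} (h : t ∈ II n) : rr n t ≤ 1 := by
  obtain ⟨h1, h2⟩ := h
  have habs : |t - Real.sqrt (n+1)| ≤ ll (n+1)/2 := abs_le.mpr ⟨by linarith, by linarith⟩
  unfold rr
  rw [div_le_one (ll_pos _)]
  linarith

lemma one_lt_rr_of_not_mem {n : ℕ} {t : ℝ} (h : t ∉ II n) : 1 < rr n t := by
  unfold II at h
  rw [Set.mem_Icc, not_and_or, not_le, not_le] at h
  unfold rr
  rw [lt_div_iff₀ (ll_pos _), one_mul]
  rcases h with h | h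
  · rw [abs_sub_comm, abs_of_pos (by linarith [ll_pos (n+1)])]; linarith
  · rw [abs_of_pos (by linarith [ll_pos (n+1)])]; linarith

lemma om_eq_of_mem {n : ℕ} {t : ℝ} (h : t ∈ II n) : om t = rr n t := by
  have hinf : (⨅ m, rr m t) = rr n t := by
    apply le_antisymm (ciInf_le (rr_bdd t) n)
    apply le_ciInf
    intro m
    by_cases hm : m = n
    · subst hm; rfl
    · have hnot : t ∉ II m := by
        intro hmem
        exact (Set.disjoint_left.mp (intervals_disjoint hm) hmem) h
      exact le_of_lt (lt_of_le_of_lt (rr_le_one_of_mem h) (one_lt_rr_of_not_mem hnot))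
  rw [om, hinf, min_eq_right (rr_le_one_of_mem h)]

lemma om_eq_one_of_not_mem {t : ℝ} (h : t ∉ ⋃ n, II n) : om t = 1 := by
  rw [om, min_eq_left]
  apply le_ciInf
  intro n
  have : t ∉ II n := fun hmem => h (Set.mem_iUnion.mpr ⟨n, hmem⟩)
  exact le_of_lt (one_lt_rr_of_not_mem this)

lemma om_mem_Icc (t : ℝ) : om t ∈ Set.Icc (0:ℝ) 1 := by
  constructor
  · rw [om]
    apply le_min zero_le_one
    exact le_ciInf (fun n => rr_nonneg n t)
  · exact min_le_left _ _

lemma om_continuous : Continuous om := by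
  rw [continuous_iff_continuousAt]
  intro t₀
  set N : ℕ := Nat.ceil ((|t₀| + 2)^2) + 1 with hN
  have htail : ∀ n : ℕ, N ≤ n → ∀ t : ℝ, t ∈ Metric.ball t₀ 1 → 1 ≤ rr n t := by
    intro n hn t ht
    have h1 : (|t₀| + 2)^2 ≤ (n:ℝ) := by
      calc (|t₀| + 2)^2 ≤ (Nat.ceil ((|t₀| + 2)^2) : ℝ) := Nat.le_ceil _
        _ ≤ (n:ℝ) := by exact_mod_cast le_trans (Nat.le_succ _) hn
    have h2 : |t₀| + 2 ≤ Real.sqrt (n + 1) := by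
      have : Real.sqrt ((|t₀|+2)^2) ≤ Real.sqrt ((n:ℝ)+1) := Real.sqrt_le_sqrt (by linarith)
      rwa [Real.sqrt_sq (by positivity)] at this
    have h3 : |t| ≤ |t₀| + 1 := by
      have := abs_sub_abs_le_abs_sub t t₀
      have hd : |t - t₀| < 1 := by simpa [Real.dist_eq] using ht
      linarith
    have h4 : 1 ≤ |t - Real.sqrt (n+1)| := by
      rw [abs_sub_comm, _root_.abs_of_nonneg (by linarith [le_abs_self t, neg_abs_le t] : 0 ≤ Real.sqrt (n+1) - t)]
      linarith [le_abs_self t]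
    unfold rr
    rw [le_div_iff₀ (ll_pos _), one_mul]
    calc ll (n+1) ≤ 1/8 := ll_le _
      _ ≤ 2 * 1 := by norm_num
      _ ≤ 2 * |t - Real.sqrt (n+1)| := by linarith
  have hne : (Finset.range (N+1)).Nonempty := ⟨0, Finset.mem_range.mpr (Nat.succ_pos _)⟩
  have heq : Set.EqOn om
      (fun t => min 1 ((Finset.range (N+1)).inf' hne (fun n => rr n t))) (Metric.ball t₀ 1) := by
    intro t ht
    apply le_antisymm
    · apply le_min (min_le_left _ _)
      obtain ⟨n₀, hn₀, hval⟩ := Finset.exists_mem_eq_inf' hne (fun n => rr n t)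
      rw [hval]
      exact min_le_of_right_le (ciInf_le (rr_bdd t) n₀)
    · apply le_min (min_le_left _ _)
      apply le_ciInf
      intro n
      rcases le_or_gt n N with h | h
      · exact le_trans (min_le_right _ _)
          (Finset.inf'_le _ (Finset.mem_range.mpr (Nat.lt_succ_of_le h)))
      · exact le_trans (min_le_left _ _) (htail n h.le t ht)
  have hcont : ContinuousAt
      (fun t => min 1 ((Finset.range (N+1)).inf' hne (fun n => rr n t))) t₀ := by
    exact Filter.Tendsto.min continuousAt_const
      (ContinuousAt.finset_inf'_apply hne (fun i _ => (rr_continuous i).continuousAt))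
  apply hcont.congr
  filter_upwards [Metric.ball_mem_nhds t₀ one_pos] with t ht
  exact (heq ht).symm

lemma neg_log_le_two_div_sqrt {a : ℝ} (ha : 0 < a) : -Real.log a ≤ 2 / Real.sqrt a := by
  have hs : 0 < Real.sqrt a := Real.sqrt_pos.mpr ha
  have h1 : Real.log (Real.sqrt a)⁻¹ ≤ (Real.sqrt a)⁻¹ - 1 :=
    Real.log_le_sub_one_of_pos (by positivity)
  rw [Real.log_inv, Real.log_sqrt ha.le] at h1
  have h2 : 2 / Real.sqrt a = 2 * (Real.sqrt a)⁻¹ := by rw [div_eq_mul_inv]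
  linarith

lemma integrable_abs_rpow_Icc {c h : ℝ} (hh : 0 ≤ h) :
    IntegrableOn (fun x => |x - c| ^ (-(1/2) : ℝ)) (Set.Icc (c - h) (c + h)) volume ∧
    ∫ x in Set.Icc (c - h) (c + h), |x - c| ^ (-(1/2) : ℝ) = 4 * Real.sqrt h := by
  have hp : (-1 : ℝ) < -(1/2) := by norm_num
  set g : ℝ → ℝ := fun y => |y| ^ (-(1/2) : ℝ) with hg
  have base : IntervalIntegrable (fun y : ℝ => y ^ (-(1/2) : ℝ)) volume 0 h :=
    intervalIntegral.intervalIntegrable_rpow' hp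
  have heq : Set.EqOn (fun y : ℝ => y ^ (-(1/2) : ℝ)) g (Set.Ioc 0 h) := by
    intro y hy
    simp only [g]
    rw [abs_of_pos hy.1]
  have hIpos : IntervalIntegrable g volume 0 h := by
    rw [intervalIntegrable_iff, Set.uIoc_of_le hh] at base ⊢
    exact base.congr_fun heq measurableSet_Ioc
  have hIneg : IntervalIntegrable g volume (-h) 0 := by
    have h1 := (IntervalIntegrable.iff_comp_neg (by simp)).mp hIpos
    have h2 : (fun x => g (-x)) = g := by funext x; simp only [g, abs_neg]
    rw [h2, neg_zero] at h1
    exact h1.symm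
  have hval0 : ∫ y in (0:ℝ)..h, g y = 2 * Real.sqrt h := by
    have heq' : Set.EqOn g (fun y : ℝ => y ^ (-(1/2) : ℝ)) (Set.uIcc 0 h) := by
      intro y hy
      rw [Set.uIcc_of_le hh] at hy
      simp only [g]
      rw [_root_.abs_of_nonneg hy.1]
    rw [intervalIntegral.integral_congr heq', integral_rpow (Or.inl hp)]
    rw [show (-(1/2) : ℝ) + 1 = 1/2 by norm_num, Real.zero_rpow (by norm_num : (1/2 : ℝ) ≠ 0),
      ← Real.sqrt_eq_rpow]
    ring
  have hvalneg : ∫ y in (-h)..(0:ℝ), g y = 2 * Real.sqrt h := by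
    have h1 := intervalIntegral.integral_comp_neg (a := (0:ℝ)) (b := h) (f := g)
    have h2 : (fun x => g (-x)) = g := by funext x; simp only [g, abs_neg]
    rw [h2, neg_zero] at h1
    rw [← h1, hval0]
  have hIboth : IntervalIntegrable g volume (-h) h := hIneg.trans hIpos
  have hsum : ∫ y in (-h)..h, g y = 4 * Real.sqrt h := by
    rw [← intervalIntegral.integral_add_adjacent_intervals hIneg hIpos, hval0, hvalneg]; ring
  have hIf : IntervalIntegrable (fun x => g (x - c)) volume (c - h) (c + h) := by
    have := hIboth.comp_sub_right c
    rwa [show -h + c = c - h by ring, show h + c = c + h by ring] at this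
  have hvf : ∫ x in (c - h)..(c + h), g (x - c) = 4 * Real.sqrt h := by
    rw [intervalIntegral.integral_comp_sub_right g c,
      show c - h - c = -h by ring, show c + h - c = h by ring, hsum]
  have hle : c - h ≤ c + h := by linarith
  constructor
  · exact (intervalIntegrable_iff_integrableOn_Icc_of_le hle).mp hIf
  · rw [MeasureTheory.integral_Icc_eq_integral_Ioc, ← intervalIntegral.integral_of_le hle]
    exact hvf

lemma norm_log_om_le {n : ℕ} {x : ℝ} (hx : x ∈ II n) :
    ‖Real.log (om x) / (1 + x^2)‖ ≤
      Real.sqrt (2 * ll (n+1)) * |x - Real.sqrt (n+1)| ^ (-(1/2) : ℝ) := by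
  have hll := ll_pos (n+1)
  set d := |x - Real.sqrt (n+1)| with hd
  have hom : om x = 2 * d / ll (n+1) := om_eq_of_mem hx
  have h1x : (1:ℝ) ≤ 1 + x^2 := by nlinarith
  have hstep1 : ‖Real.log (om x) / (1 + x^2)‖ ≤ -Real.log (om x) := by
    rw [norm_div, Real.norm_eq_abs, Real.norm_eq_abs,
      _root_.abs_of_pos (by linarith : (0:ℝ) < 1 + x^2)]
    have habs : |Real.log (om x)| = -Real.log (om x) :=
      abs_of_nonpos (Real.log_nonpos (om_mem_Icc x).1 (om_mem_Icc x).2)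
    rw [habs]
    apply div_le_self (by rw [← habs]; exact abs_nonneg _) h1x
  by_cases hd0 : d = 0
  · rw [hom, hd0]
    simp [Real.zero_rpow (by norm_num : (-(1/2):ℝ) ≠ 0)]
  · have hdpos : 0 < d := lt_of_le_of_ne (abs_nonneg _) (Ne.symm hd0)
    have hapos : 0 < om x := by rw [hom]; positivity
    have hstep2 : -Real.log (om x) ≤ 2 / Real.sqrt (om x) := neg_log_le_two_div_sqrt hapos
    have hrpow : d ^ (-(1/2) : ℝ) = (Real.sqrt d)⁻¹ := by
      rw [show (-(1/2) : ℝ) = -(1/2) by norm_num, Real.rpow_neg hdpos.le,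
        ← Real.sqrt_eq_rpow]
    have hkey : 2 / Real.sqrt (om x) = Real.sqrt (2 * ll (n+1)) * d ^ (-(1/2) : ℝ) := by
      rw [hrpow, hom]
      rw [Real.sqrt_div (by positivity : (0:ℝ) ≤ 2 * d) (ll (n+1)),
        Real.sqrt_mul (by norm_num : (0:ℝ) ≤ 2) d,
        Real.sqrt_mul (by norm_num : (0:ℝ) ≤ 2) (ll (n+1))]
      have h2 : Real.sqrt 2 * Real.sqrt 2 = 2 := Real.mul_self_sqrt (by norm_num)
      have hsd : 0 < Real.sqrt d := Real.sqrt_pos.mpr hdpos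
      have hsl : 0 < Real.sqrt (ll (n+1)) := Real.sqrt_pos.mpr hll
      have hs2 : 0 < Real.sqrt 2 := Real.sqrt_pos.mpr (by norm_num)
      field_simp
      linear_combination (-1 : ℝ) * h2
    calc ‖Real.log (om x) / (1 + x^2)‖ ≤ -Real.log (om x) := hstep1
      _ ≤ 2 / Real.sqrt (om x) := hstep2
      _ = _ := hkey

lemma ll_summable : Summable ll := by
  unfold ll
  exact (summable_geometric_of_lt_one (by norm_num) (by norm_num)).mul_left _

lemma om_integrable : Integrable (fun x => Real.log (om x) / (1 + x^2)) volume := by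
  have hmeas : AEStronglyMeasurable (fun x : ℝ => Real.log (om x) / (1 + x^2)) volume := by
    apply Measurable.aestronglyMeasurable
    exact (Real.measurable_log.comp om_continuous.measurable).div
      ((continuous_const.add (continuous_pow 2)).measurable)
  refine ⟨hmeas, ?_⟩
  rw [hasFiniteIntegral_iff_norm]
  set k : ℕ → ℝ → ℝ := fun n x => Real.sqrt (2 * ll (n+1)) * |x - Real.sqrt (n+1)| ^ (-(1/2) : ℝ)
    with hk
  have hbound : ∀ x : ℝ, ENNReal.ofReal ‖Real.log (om x) / (1 + x^2)‖ ≤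
      ∑' n, (II n).indicator (fun y => ENNReal.ofReal (k n y)) x := by
    intro x
    by_cases hx : x ∈ ⋃ n, II n
    · obtain ⟨n, hn⟩ := Set.mem_iUnion.mp hx
      calc ENNReal.ofReal ‖Real.log (om x) / (1 + x^2)‖
          ≤ (II n).indicator (fun y => ENNReal.ofReal (k n y)) x := by
            rw [Set.indicator_of_mem hn]
            exact ENNReal.ofReal_le_ofReal (norm_log_om_le hn)
        _ ≤ _ := ENNReal.le_tsum n
    · have : om x = 1 := om_eq_one_of_not_mem hx
      rw [this]
      simp
  calc ∫⁻ x, ENNReal.ofReal ‖Real.log (om x) / (1 + x^2)‖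
      ≤ ∫⁻ x, ∑' n, (II n).indicator (fun y => ENNReal.ofReal (k n y)) x := by
        exact lintegral_mono hbound
    _ = ∑' n, ∫⁻ x, (II n).indicator (fun y => ENNReal.ofReal (k n y)) x := by
        apply lintegral_tsum
        intro n
        apply AEMeasurable.indicator _ (by unfold II; exact measurableSet_Icc)
        apply Measurable.aemeasurable
        apply ENNReal.measurable_ofReal.comp
        apply Measurable.const_mul
        exact ((measurable_id.sub measurable_const).abs).pow_const _
    _ = ∑' n, ∫⁻ x in II n, ENNReal.ofReal (k n x) := by
        congr 1; funext n
        have hms : MeasurableSet (II n) := by unfold II; exact measurableSet_Icc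
        rw [lintegral_indicator hms]
    _ ≤ ∑' n, ENNReal.ofReal (4 * ll (n+1)) := by
        apply ENNReal.tsum_le_tsum
        intro n
        have hll := ll_pos (n+1)
        obtain ⟨hint, hval⟩ := integrable_abs_rpow_Icc
          (c := Real.sqrt (n+1)) (h := ll (n+1)/2) (by linarith : (0:ℝ) ≤ ll (n+1)/2)
        have hint' : IntegrableOn (k n) (II n) volume := by
          unfold k
          exact (hint.const_mul _)
        have hnn : 0 ≤ᵐ[volume.restrict (II n)] (k n) := by
          apply Filter.Eventually.of_forall
          intro y
          unfold k
          positivity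
        rw [← MeasureTheory.ofReal_integral_eq_lintegral_ofReal hint' hnn]
        apply ENNReal.ofReal_le_ofReal
        have : ∫ x in II n, k n x = Real.sqrt (2 * ll (n+1)) * (4 * Real.sqrt (ll (n+1)/2)) := by
          unfold k
          rw [MeasureTheory.integral_const_mul]
          rw [show II n = Set.Icc (Real.sqrt (n+1) - ll (n+1)/2) (Real.sqrt (n+1) + ll (n+1)/2)
            from rfl, hval]
        rw [this]
        have heq : Real.sqrt (2 * ll (n+1)) * Real.sqrt (ll (n+1)/2) = ll (n+1) := by
          rw [← Real.sqrt_mul (by positivity)]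
          rw [show 2 * ll (n+1) * (ll (n+1)/2) = (ll (n+1))^2 by ring]
          exact Real.sqrt_sq hll.le
        nlinarith [heq]
    _ < ⊤ := by
        rw [← ENNReal.ofReal_tsum_of_nonneg (fun n => by have := ll_pos (n+1); positivity)
          (by
            have := ll_summable
            exact ((summable_nat_add_iff 1).mpr this).mul_left 4)]
        exact ENNReal.ofReal_lt_top

lemma om_center_zero (n : ℕ) : om (Real.sqrt (n + 1)) = 0 := by
  have hll := ll_pos (n+1)
  have hmem : Real.sqrt (n+1) ∈ II n := by
    constructor <;> [linarith; linarith]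
  rw [om_eq_of_mem hmem]
  unfold rr
  simp

/-- There exists a continuous `ω : ℝ → [0,1]` with finite logarithmic integral
`𝓛(ω) = ∫ log ω(x)/(1+x²) dx > -∞` which is not a Beurling–Malliavin majorant: for every
`σ > 0` the only entire function `F` with `|F(z)| ≤ C e^{σ|z|}`, `F|ℝ ∈ L²` and `|F| ≤ ω`
on `ℝ` is `F ≡ 0`.  Such an `ω` is obtained by taking `ω(t) = 2|t - √n|/|Iₙ|` on pairwise
disjoint intervals `Iₙ` centered at `√n` with `Σ |Iₙ| < ∞`, and `ω(t) = 1` elsewhere. -/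
theorem exists_non_BM_majorant_with_finite_log_integral :
    ∃ (ω : ℝ → ℝ) (ℓ : ℕ → ℝ),
      -- the construction: intervals `Iₙ` of length `ℓ n` centered at `√n`
      (∀ n : ℕ, 0 < ℓ (n + 1)) ∧
      (Pairwise fun m n : ℕ =>
        Disjoint (Set.Icc (Real.sqrt (m + 1) - ℓ (m + 1) / 2) (Real.sqrt (m + 1) + ℓ (m + 1) / 2))
          (Set.Icc (Real.sqrt (n + 1) - ℓ (n + 1) / 2) (Real.sqrt (n + 1) + ℓ (n + 1) / 2))) ∧
      Summable ℓ ∧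
      (∀ n : ℕ, ∀ t ∈ Set.Icc (Real.sqrt (n + 1) - ℓ (n + 1) / 2)
          (Real.sqrt (n + 1) + ℓ (n + 1) / 2),
        ω t = 2 * |t - Real.sqrt (n + 1)| / ℓ (n + 1)) ∧
      (∀ t : ℝ, t ∉ ⋃ n : ℕ, Set.Icc (Real.sqrt (n + 1) - ℓ (n + 1) / 2)
          (Real.sqrt (n + 1) + ℓ (n + 1) / 2) → ω t = 1) ∧
      -- the properties of `ω`
      Continuous ω ∧ (∀ t : ℝ, ω t ∈ Set.Icc (0 : ℝ) 1) ∧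
      Integrable (fun x => Real.log (ω x) / (1 + x ^ 2)) ∧
      ∀ σ : ℝ, 0 < σ → ∀ F : ℂ → ℂ, Differentiable ℂ F →
        (∃ C : ℝ, ∀ z : ℂ, ‖F z‖ ≤ C * Real.exp (σ * ‖z‖)) →
        MemLp (fun x : ℝ => F x) 2 volume →
        (∀ x : ℝ, ‖F (x : ℂ)‖ ≤ ω x) →
        ∀ z : ℂ, F z = 0 := by
  refine ⟨om, ll, fun n => ll_pos (n+1), intervals_disjoint, ll_summable,
    ?_, ?_, om_continuous, om_mem_Icc, om_integrable, ?_⟩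
  · intro n t ht
    have h := om_eq_of_mem (n := n) ht
    rw [h]
    rfl
  · intro t ht
    exact om_eq_one_of_not_mem ht
  · rintro σ hσ F hF ⟨C, hC⟩ _ hω z
    apply kill_lemma hF hC _ z
    intro n
    have h1 : ‖F (Real.sqrt (n+1))‖ ≤ om (Real.sqrt (n+1)) := hω _
    rw [om_center_zero n] at h1
    exact norm_le_zero_iff.mp h1
end

section
/- (Contagious smallness lemma) There is an absolute constant C > 0 such that for every σ > 0 there exist α(σ) ∈ (0, 1/2) and h(σ) > 2 with the following property: for every h ≥ h(σ), every entire function f with |f(z)| ≤ e^{σ|z|} for all z ∈ ℂ and |f(x)| ≤ 1 for all x ∈ ℝ, and every compact interval I ⊂ ℝ, if |f(x)| ≤ e^{−h T_I(x)} for all x ∈ ℝ, then |f(x)| ≤ e^{−C h |I|} for all x in the interval Ĩ centered at the center of I with length |Ĩ| = √(h^{2α(σ)} − 1) · |I|. -/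
open MeasureTheory Filter Topology Complex Set

/-- The "solitary tooth" based on the interval `[a,b]`: `T_{[a,b]}(x) = dist(x, ℝ \ [a,b])`,
which equals `max (min (x - a) (b - x)) 0`. -/
noncomputable def tooth (a b x : ℝ) : ℝ := max (min (x - a) (b - x)) 0

/-- Membership in the class `𝓔_{σ,1}`: `f` is entire, `|f(z)| ≤ e^{σ|z|}` on `ℂ` and
`|f| ≤ 1` on `ℝ`. -/
def MemE (σ : ℝ) (f : ℂ → ℂ) : Prop :=
  Differentiable ℂ f ∧ (∀ z : ℂ, ‖f z‖ ≤ Real.exp (σ * ‖z‖)) ∧ ∀ x : ℝ, ‖f (x : ℂ)‖ ≤ 1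

lemma abs_cosh_le' (w : ℂ) : ‖Complex.cosh w‖ ≤ Real.exp |w.re| := by
  have hdef : Complex.cosh w = (Complex.exp w + Complex.exp (-w))/2 := rfl
  rw [hdef]
  have h1 : ‖(Complex.exp w + Complex.exp (-w))/2‖
      ≤ (‖Complex.exp w‖ + ‖Complex.exp (-w)‖)/2 := by
    rw [norm_div]
    have h2 : ‖(2:ℂ)‖ = 2 := by norm_num
    rw [h2]
    gcongr
    exact norm_add_le _ _
  refine h1.trans ?_
  rw [Complex.norm_exp, Complex.norm_exp]
  have e1 : Real.exp w.re ≤ Real.exp |w.re| := Real.exp_le_exp.mpr (le_abs_self _)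
  have e2 : Real.exp (-w).re ≤ Real.exp |w.re| := by
    rw [Complex.neg_re]
    exact Real.exp_le_exp.mpr (neg_le_abs _)
  linarith

lemma memE_im_bound {σ : ℝ} (hσ : 0 < σ) {f : ℂ → ℂ} (hf : MemE σ f) (z : ℂ) :
    ‖f z‖ ≤ Real.exp (σ * |z.im|) := by
  obtain ⟨hd, hg, hb⟩ := hf
  -- helper for big-O hypotheses
  have hO : ∀ (c : ℂ) (l : Filter ℂ), ‖c‖ ≤ σ →
      (fun z => f z * Complex.exp (c * z)) =O[l] fun z => Real.exp (2 * σ * ‖z‖ ^ (1:ℝ)) := by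
    intro c l hc
    apply Asymptotics.IsBigO.of_bound 1
    filter_upwards with z
    have h1 : ‖f z * Complex.exp (c * z)‖ = ‖f z‖ * Real.exp ((c*z).re) := by
      rw [norm_mul, Complex.norm_exp]
    have h2 : (c*z).re ≤ σ * ‖z‖ := by
      calc (c*z).re ≤ |(c*z).re| := le_abs_self _
        _ ≤ ‖c*z‖ := Complex.abs_re_le_norm _
        _ = ‖c‖ * ‖z‖ := norm_mul _ _
        _ ≤ σ * ‖z‖ := by
            apply mul_le_mul_of_nonneg_right _ (norm_nonneg z)
            simpa using hc
        _ = σ * ‖z‖ := rfl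
    rw [h1, Real.norm_eq_abs, Real.abs_exp, one_mul, Real.rpow_one]
    calc ‖f z‖ * Real.exp ((c*z).re) ≤ Real.exp (σ * ‖z‖) * Real.exp (σ * ‖z‖) := by
          apply mul_le_mul (hg z) (Real.exp_le_exp.mpr h2) (Real.exp_pos _).le (Real.exp_pos _).le
      _ = Real.exp (2 * σ * ‖z‖) := by rw [← Real.exp_add]; ring_nf
  have hcI : ‖Complex.I * (σ:ℂ)‖ ≤ σ := by simp [abs_of_pos hσ]
  have key : ∀ w : ℂ, ‖f w * Complex.exp (Complex.I * (σ:ℂ) * w)‖ ≤ 1 →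
      ‖f w‖ ≤ Real.exp (σ * w.im) := by
    intro w hw
    have hre : (Complex.I * (σ:ℂ) * w).re = -(σ * w.im) := by
      simp [Complex.mul_re, Complex.mul_im]
    rw [norm_mul, Complex.norm_exp, hre, Real.exp_neg,
      mul_inv_le_iff₀' (Real.exp_pos _)] at hw
    simpa using hw
  have keyn : ∀ w : ℂ, ‖f w * Complex.exp (-Complex.I * (σ:ℂ) * w)‖ ≤ 1 →
      ‖f w‖ ≤ Real.exp (-(σ * w.im)) := by
    intro w hw
    have hre : (-Complex.I * (σ:ℂ) * w).re = σ * w.im := by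
      simp [Complex.mul_re, Complex.mul_im]
    rw [norm_mul, Complex.norm_exp, hre] at hw
    refine le_of_mul_le_mul_right ?_ (Real.exp_pos (σ * w.im))
    rw [← Real.exp_add, neg_add_cancel, Real.exp_zero]
    exact hw
  have hax : ∀ (c : ℂ), c.re = 0 → ∀ x : ℝ, ‖f x * Complex.exp (c * x)‖ ≤ 1 := by
    intro c hc x
    have : (c * (x:ℂ)).re = 0 := by simp [Complex.mul_re, hc]
    rw [norm_mul, Complex.norm_exp, this, Real.exp_zero, mul_one]
    exact hb x
  have haxp : ∀ x : ℝ, ‖f x * Complex.exp (Complex.I * (σ:ℂ) * x)‖ ≤ 1 := by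
    intro x; exact hax _ (by simp) x
  have haxn : ∀ x : ℝ, ‖f x * Complex.exp (-Complex.I * (σ:ℂ) * x)‖ ≤ 1 := by
    intro x; exact hax _ (by simp) x
  have him2 : ∀ (c : ℂ) (x v : ℝ), (c * ((x:ℂ) * Complex.I)).re = v →
      σ * |x| + v ≤ 0 → ‖f ((x:ℂ) * Complex.I) * Complex.exp (c * ((x:ℂ) * Complex.I))‖ ≤ 1 := by
    intro c x v hcre hsign
    rw [norm_mul, Complex.norm_exp, hcre]
    calc ‖f ((x:ℂ) * Complex.I)‖ * Real.exp v
        ≤ Real.exp (σ * ‖(x:ℂ) * Complex.I‖) * Real.exp v :=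
          mul_le_mul_of_nonneg_right (hg _) (Real.exp_pos _).le
      _ ≤ 1 := by
          rw [← Real.exp_add, ← Real.exp_zero]
          apply Real.exp_le_exp.mpr
          have : ‖(x:ℂ) * Complex.I‖ = |x| := by simp
          rw [this]; linarith
  have himp : ∀ x : ℝ, 0 ≤ x → ‖f ((x:ℂ) * Complex.I) * Complex.exp (Complex.I * (σ:ℂ) * ((x:ℂ) * Complex.I))‖ ≤ 1 := by
    intro x hx
    refine him2 _ x (-(σ * x)) (by simp [Complex.mul_re, Complex.mul_im]) ?_
    rw [_root_.abs_of_nonneg hx]; linarith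
  have himn : ∀ x : ℝ, x ≤ 0 → ‖f ((x:ℂ) * Complex.I) * Complex.exp (-Complex.I * (σ:ℂ) * ((x:ℂ) * Complex.I))‖ ≤ 1 := by
    intro x hx
    refine him2 _ x (σ * x) (by simp [Complex.mul_re, Complex.mul_im]) ?_
    rw [_root_.abs_of_nonpos hx]; linarith
  have hdp : ∀ s : Set ℂ, DiffContOnCl ℂ (fun w => f w * Complex.exp (Complex.I * (σ:ℂ) * w)) s :=
    fun s => ((hd.mul ((Complex.differentiable_exp).comp ((differentiable_const _).mul differentiable_id))).diffContOnCl)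
  have hdn : ∀ s : Set ℂ, DiffContOnCl ℂ (fun w => f w * Complex.exp (-Complex.I * (σ:ℂ) * w)) s :=
    fun s => ((hd.mul ((Complex.differentiable_exp).comp ((differentiable_const _).mul differentiable_id))).diffContOnCl)
  have hcIn : ‖-Complex.I * (σ:ℂ)‖ ≤ σ := by simp [abs_of_pos hσ]
  rcases le_total 0 z.im with him | him
  · rw [_root_.abs_of_nonneg him]
    apply key
    rcases le_total 0 z.re with hre | hre
    · exact PhragmenLindelof.quadrant_I (f := fun w => f w * Complex.exp (Complex.I * (σ:ℂ) * w)) (hdp _) ⟨1, one_lt_two, 2 * σ, hO _ _ hcI⟩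
        (fun x hx => haxp x) himp hre him
    · exact PhragmenLindelof.quadrant_II (f := fun w => f w * Complex.exp (Complex.I * (σ:ℂ) * w)) (hdp _) ⟨1, one_lt_two, 2 * σ, hO _ _ hcI⟩
        (fun x hx => haxp x) himp hre him
  · have hb1 : ‖f z‖ ≤ Real.exp (-(σ * z.im)) := by
      apply keyn
      rcases le_total 0 z.re with hre | hre
      · exact PhragmenLindelof.quadrant_IV (f := fun w => f w * Complex.exp (-Complex.I * (σ:ℂ) * w)) (hdn _) ⟨1, one_lt_two, 2 * σ, hO _ _ hcIn⟩
          (fun x hx => haxn x) himn hre him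
      · exact PhragmenLindelof.quadrant_III (f := fun w => f w * Complex.exp (-Complex.I * (σ:ℂ) * w)) (hdn _) ⟨1, one_lt_two, 2 * σ, hO _ _ hcIn⟩
          (fun x hx => haxn x) himn hre him
    rw [_root_.abs_of_nonpos him]
    simpa [mul_neg] using hb1

set_option maxHeartbeats 2000000 in
/-- **Contagious smallness lemma.** There is an absolute constant `C > 0` such that for every
`σ > 0` there exist `α(σ) ∈ (0, 1/2)` and `h(σ) > 2` with: for every `h ≥ h(σ)`, every
`f ∈ 𝓔_{σ,1}` and every compact interval `I = [a,b]`, if `|f| ≤ e^{-h T_I}` on `ℝ`, then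
`|f| ≤ e^{-C h |I|}` on the interval `Ĩ` centered at the center of `I` with
`|Ĩ| = √(h^{2α(σ)} - 1) |I|`. -/
theorem contagious_smallness :
    ∃ C : ℝ, 0 < C ∧ ∀ σ : ℝ, 0 < σ →
      ∃ α : ℝ, α ∈ Set.Ioo (0 : ℝ) (1 / 2) ∧ ∃ h₀ : ℝ, 2 < h₀ ∧
        ∀ h : ℝ, h₀ ≤ h → ∀ f : ℂ → ℂ, MemE σ f →
          ∀ a b : ℝ, a ≤ b →
            (∀ x : ℝ, ‖f (x : ℂ)‖ ≤ Real.exp (-(h * tooth a b x))) →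
            ∀ x : ℝ, |x - (a + b) / 2| ≤ Real.sqrt (h ^ (2 * α) - 1) * (b - a) / 2 →
              ‖f (x : ℂ)‖ ≤ Real.exp (-(C * h * (b - a))) := by
  refine ⟨1/8, by norm_num, fun σ hσ => ⟨1/8, by constructor <;> norm_num, (512*σ+2)^2, ?_, ?_⟩⟩
  · nlinarith [sq_nonneg σ, hσ]
  intro h hh f hf a b hab hyp x hx
  have h24 : (2:ℝ) * (1/8) = 1/4 := by norm_num
  rw [h24] at hx
  have hσ4 : (4:ℝ) ≤ (512*σ+2)^2 := by nlinarith [hσ.le]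
  have h4 : (4:ℝ) ≤ h := hσ4.trans hh
  have hh0 : (0:ℝ) < h := by linarith
  have hh1 : (1:ℝ) ≤ h := by linarith
  have hba0 : (0:ℝ) ≤ b - a := sub_nonneg.mpr hab
  set c : ℝ := (a+b)/2 with hc
  set r : ℝ := (b-a)/4 with hr
  set d : ℝ := |x - c| with hd
  have hca : c - a = 2*r := by rw [hc, hr]; ring
  have hbc : b - c = 2*r := by rw [hc, hr]; ring
  have hd0 : (0:ℝ) ≤ d := abs_nonneg _
  by_cases hdr : d ≤ r
  · -- near the middle: use the hypothesis directly
    have hxa : r ≤ x - a := by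
      have : -(x - c) ≤ d := neg_le_abs _
      linarith
    have hbx : r ≤ b - x := by
      have : x - c ≤ d := le_abs_self _
      linarith
    have htooth : r ≤ tooth a b x := le_max_of_le_left (le_min hxa hbx)
    refine (hyp x).trans (Real.exp_le_exp.mpr ?_)
    rw [neg_le_neg_iff]
    have h1 : h * r ≤ h * tooth a b x := mul_le_mul_of_nonneg_left htooth hh0.le
    have h2 : 0 ≤ h * (b-a) := mul_nonneg hh0.le hba0
    rw [hr] at h1
    linarith [h1, h2]
  · push_neg at hdr
    have hba1 : (0:ℝ) < b - a := by
      rcases lt_or_eq_of_le hba0 with h' | h'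
      · exact h'
      · exfalso
        have hre : r = 0 := by rw [hr, ← h']; ring
        rw [hre] at hdr
        have hz : Real.sqrt (h ^ ((1:ℝ)/4) - 1) * (b - a) / 2 = 0 := by
          rw [← h']; ring
        linarith [hx, hz, hd0, hdr]
    have hr0 : (0:ℝ) < r := by rw [hr]; linarith
    -- the Joukowski parameter
    set u : ℝ := d / r with hu
    have hu1 : 1 < u := (one_lt_div hr0).mpr hdr
    have h18 : (1:ℝ) ≤ h ^ ((1:ℝ)/8) := Real.one_le_rpow hh1 (by norm_num)
    have hu_le : u ≤ 2 * h ^ ((1:ℝ)/8) := by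
      have h2 : Real.sqrt (h ^ ((1:ℝ)/4) - 1) ≤ h ^ ((1:ℝ)/8) := by
        have := Real.sqrt_le_sqrt (show h ^ ((1:ℝ)/4) - 1 ≤ h ^ ((1:ℝ)/4) by linarith)
        refine this.trans ?_
        rw [Real.sqrt_eq_rpow, ← Real.rpow_mul hh0.le]
        norm_num
      have hd_le : d ≤ h ^ ((1:ℝ)/8) * (b-a) / 2 := by
        refine hx.trans ?_
        have := mul_le_mul_of_nonneg_right h2 hba0
        linarith
      rw [hu, div_le_iff₀ hr0, hr]
      linarith
    set s1 : ℝ := Real.sqrt (u^2 - 1) with hs1def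
    have hu21 : (0:ℝ) ≤ u^2 - 1 := by nlinarith
    have hs1sq : s1^2 = u^2 - 1 := Real.sq_sqrt hu21
    have hs1nonneg : 0 ≤ s1 := Real.sqrt_nonneg _
    have hs1u : s1 ≤ u := by
      have : s1 ≤ Real.sqrt (u^2) := Real.sqrt_le_sqrt (by linarith)
      rwa [Real.sqrt_sq (by linarith : (0:ℝ) ≤ u)] at this
    set y : ℝ := u + s1 with hy
    have hy1 : 1 ≤ y := by rw [hy]; linarith
    have hy0 : 0 < y := by linarith
    have hyinv : y⁻¹ = u - s1 := by
      refine inv_eq_of_mul_eq_one_right ?_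
      rw [hy]; linear_combination -hs1sq
    set t0 : ℝ := Real.log y with ht0def
    have ht0 : 0 ≤ t0 := Real.log_nonneg hy1
    have hcosh : Real.cosh t0 = u := by
      rw [ht0def, Real.cosh_log hy0, hyinv]; ring
    set M : ℝ := 4 * h ^ ((1:ℝ)/8) with hM
    have hM4 : 4 ≤ M := by rw [hM]; linarith
    have hyM : y ≤ M := by rw [hy, hM]; linarith
    set L : ℝ := 4 * Real.log M with hL
    have hlogM : 0 < Real.log M := Real.log_pos (by linarith)
    have hL0 : 0 < L := by rw [hL]; linarith
    have ht0L : t0 ≤ L/4 := by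
      rw [hL, ht0def]
      have : Real.log y ≤ Real.log M := Real.log_le_log hy0 hyM
      linarith
    set s : ℝ := t0 / L with hsdef
    have hs0 : 0 ≤ s := div_nonneg ht0 hL0.le
    have hs14 : s ≤ 1/4 := by
      rw [hsdef, div_le_iff₀ hL0]
      linarith
    have hexpL : Real.exp L = 256 * h ^ ((1:ℝ)/2) := by
      rw [hL, show (4:ℝ) * Real.log M = Real.log M * 4 by ring, Real.exp_mul,
        Real.exp_log (by linarith : (0:ℝ) < M), hM,
        Real.mul_rpow (by norm_num : (0:ℝ) ≤ 4) (Real.rpow_nonneg hh0.le _),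
        ← Real.rpow_mul hh0.le]
      norm_num
    have hσL : σ * Real.exp L ≤ h / 2 := by
      have hsq : Real.sqrt h * Real.sqrt h = h := Real.mul_self_sqrt hh0.le
      have h512 : 512 * σ + 2 ≤ Real.sqrt h := by
        have := Real.sqrt_le_sqrt hh
        rwa [Real.sqrt_sq (by positivity : (0:ℝ) ≤ 512*σ+2)] at this
      have hhalf : h ^ ((1:ℝ)/2) = Real.sqrt h := by
        rw [Real.sqrt_eq_rpow]
      rw [hexpL, hhalf]
      have hq0 : 0 ≤ Real.sqrt h := Real.sqrt_nonneg h
      have p1 : 512*σ*Real.sqrt h + 2*Real.sqrt h ≤ h := by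
        calc 512*σ*Real.sqrt h + 2*Real.sqrt h = (512*σ+2)*Real.sqrt h := by ring
          _ ≤ Real.sqrt h * Real.sqrt h := mul_le_mul_of_nonneg_right h512 hq0
          _ = h := hsq
      linarith [p1, hq0]
    -- the strip function
    set g : ℂ → ℂ := fun z => f (↑c + ↑r * Complex.cosh (↑L * z)) with hg
    have pl := memE_im_bound hσ hf
    have hBgen : ∀ z : ℂ, z.re ∈ Icc (0:ℝ) 1 → ‖g z‖ ≤ Real.exp (σ * (r * Real.exp L)) := by
      intro z hz
      have him : |(↑c + ↑r * Complex.cosh (↑L * z)).im| ≤ r * Real.exp L := by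
        have h1 : (↑c + ↑r * Complex.cosh ((L:ℂ) * z)).im
            = r * (Complex.cosh ((L:ℂ) * z)).im := by
          simp
        rw [h1, abs_mul, _root_.abs_of_nonneg hr0.le]
        have h2 : |(Complex.cosh ((L:ℂ) * z)).im| ≤ Real.exp L := by
          have h3 : |(Complex.cosh ((L:ℂ) * z)).im| ≤ ‖Complex.cosh ((L:ℂ) * z)‖ :=
            Complex.abs_im_le_norm _
          refine (h3.trans (abs_cosh_le' _)).trans (Real.exp_le_exp.mpr ?_)
          have h4 : ((L:ℂ) * z).re = L * z.re := by simp
          rw [h4, abs_mul, _root_.abs_of_nonneg hL0.le]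
          have hzre : |z.re| ≤ 1 := by
            rw [abs_le]; exact ⟨by linarith [hz.1], hz.2⟩
          have := mul_le_mul_of_nonneg_left hzre hL0.le
          simpa using this
        exact mul_le_mul_of_nonneg_left h2 hr0.le
      exact (pl _).trans (Real.exp_le_exp.mpr (mul_le_mul_of_nonneg_left him hσ.le))
    have hdiffg : DiffContOnCl ℂ g (Complex.HadamardThreeLines.verticalStrip 0 1) := by
      apply Differentiable.diffContOnCl
      exact hf.1.comp ((differentiable_const _).add ((differentiable_const _).mul
        (Complex.differentiable_cosh.comp ((differentiable_const _).mul differentiable_id))))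
    have hbdd : BddAbove ((norm ∘ g) '' Complex.HadamardThreeLines.verticalClosedStrip 0 1) := by
      refine ⟨Real.exp (σ * (r * Real.exp L)), ?_⟩
      rintro v ⟨z, hz, rfl⟩
      exact hBgen z hz
    have hline0 : ∀ z : ℂ, z.re ∈ ({0}: Set ℝ) → ‖g z‖ ≤ Real.exp (-(h * r)) := by
      intro z hz
      have hz0 : z.re = 0 := hz
      have hzeq : z = (z.im : ℂ) * Complex.I := by
        apply Complex.ext <;> simp [hz0]
      have hcoshz : Complex.cosh ((L:ℂ) * z) = ((Real.cos (L * z.im) : ℝ) : ℂ) := by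
        have hz' : (L:ℂ) * z = ((L * z.im : ℝ) : ℂ) * Complex.I := by
          apply Complex.ext <;>
            simp [hz0, Complex.mul_re, Complex.mul_im]
        rw [hz', Complex.cosh_mul_I, Complex.ofReal_cos]
      have hgz : g z = f ((c + r * Real.cos (L * z.im) : ℝ) : ℂ) := by
        rw [hg]
        simp only
        rw [hcoshz]
        norm_cast
      rw [hgz]
      set p : ℝ := c + r * Real.cos (L * z.im) with hp
      have hcos1 : |Real.cos (L * z.im)| ≤ 1 := Real.abs_cos_le_one _
      have hcos1' : -1 ≤ Real.cos (L * z.im) ∧ Real.cos (L * z.im) ≤ 1 := abs_le.mp hcos1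
      have htooth : r ≤ tooth a b p := by
        refine le_max_of_le_left (le_min ?_ ?_)
        · have : p - a = 2*r + r * Real.cos (L * z.im) := by rw [hp]; linarith [hca]
          rw [this]
          have h5 : 0 ≤ r * (1 + Real.cos (L * z.im)) :=
            mul_nonneg hr0.le (by linarith [hcos1'.1])
          linarith [h5]
        · have : b - p = 2*r - r * Real.cos (L * z.im) := by rw [hp]; linarith [hbc]
          rw [this]
          have h5 : 0 ≤ r * (1 - Real.cos (L * z.im)) :=
            mul_nonneg hr0.le (by linarith [hcos1'.2])
          linarith [h5]
      refine (hyp p).trans (Real.exp_le_exp.mpr ?_)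
      rw [neg_le_neg_iff]
      exact mul_le_mul_of_nonneg_left htooth hh0.le
    -- pick the evaluation point
    have hmain : ∀ θ : ℝ, Complex.cosh ((t0:ℂ) + (θ:ℂ) * Complex.I)
        = ((Real.cosh t0 * Real.cos θ : ℝ) : ℂ) + ((Real.sinh t0 * Real.sin θ : ℝ):ℂ) * Complex.I := by
      intro θ
      rw [Complex.cosh_add, Complex.cosh_mul_I, Complex.sinh_mul_I, ← Complex.ofReal_cosh,
        ← Complex.ofReal_sinh, ← Complex.ofReal_cos, ← Complex.ofReal_sin]
      push_cast
      ring
    -- uniform Hadamard step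
    have key : ∀ z₀ : ℂ, z₀.re = s → g z₀ = f ((x:ℝ):ℂ) →
        ‖f ((x:ℝ):ℂ)‖ ≤ Real.exp (-(1/8 * h * (b - a))) := by
      intro z₀ hz₀re hgz₀
      have hz₀mem : z₀ ∈ Complex.HadamardThreeLines.verticalClosedStrip 0 1 := by
        simp only [Complex.HadamardThreeLines.verticalClosedStrip, mem_preimage, hz₀re]
        exact ⟨hs0, by linarith⟩
      have happ := Complex.HadamardThreeLines.norm_le_interp_of_mem_verticalClosedStrip' (f := g) zero_lt_one
        hz₀mem hdiffg hbdd (fun z hz => hline0 z hz)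
        (fun z hz => hBgen z (by rw [mem_preimage, mem_singleton_iff] at hz
                                 rw [hz]; exact ⟨zero_le_one, le_refl 1⟩))
      rw [hgz₀, hz₀re] at happ
      simp only [sub_zero, div_one] at happ
      refine happ.trans ?_
      rw [← Real.exp_mul, ← Real.exp_mul, ← Real.exp_add]
      apply Real.exp_le_exp.mpr
      have hprod : σ * Real.exp L * s ≤ (h/2) * (1/4) :=
        mul_le_mul hσL hs14 hs0 (by linarith)
      have hA : σ * Real.exp L * s ≤ h/8 := by linarith [hprod]
      have hB : (σ * Real.exp L * s) * r ≤ (h/8) * r := mul_le_mul_of_nonneg_right hA hr0.le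
      have hC : h * s ≤ h * (1/4) := mul_le_mul_of_nonneg_left hs14 hh0.le
      have hD : (h * s) * r ≤ (h * (1/4)) * r := mul_le_mul_of_nonneg_right hC hr0.le
      have h4r : b - a = 4*r := by rw [hr]; ring
      rw [h4r]
      linarith [hB, hD, mul_nonneg hh0.le hr0.le]
    have hru : r * u = d := by rw [hu]; field_simp
    rcases le_or_gt c x with hcx | hcx
    · -- x = c + d
      have hdx : d = x - c := by rw [hd, _root_.abs_of_nonneg (by linarith)]
      refine key ((t0/L : ℝ) : ℂ) (by simp [hsdef]) ?_
      rw [hg]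
      simp only
      have hLz : (L:ℂ) * ((t0/L : ℝ) : ℂ) = ((t0:ℝ):ℂ) := by
        push_cast
        rw [mul_div_cancel₀]
        exact_mod_cast hL0.ne'
      rw [hLz, ← Complex.ofReal_cosh, hcosh]
      have hxx : c + r * u = x := by rw [hru]; linarith [hdx]
      norm_cast
      rw [hxx]
    · -- x = c - d
      have hdx : d = c - x := by rw [hd, abs_sub_comm, _root_.abs_of_nonneg (by linarith)]
      refine key (((t0/L : ℝ) : ℂ) + ((Real.pi/L : ℝ) : ℂ) * Complex.I) (by simp [hsdef]) ?_
      rw [hg]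
      simp only
      have hLz : (L:ℂ) * (((t0/L : ℝ) : ℂ) + ((Real.pi/L : ℝ) : ℂ) * Complex.I)
          = ((t0:ℝ):ℂ) + ((Real.pi:ℝ):ℂ) * Complex.I := by
        have e1 : L * (t0/L) = t0 := by field_simp
        have e2 : L * (Real.pi/L) = Real.pi := by field_simp
        calc (L:ℂ) * (((t0/L : ℝ) : ℂ) + ((Real.pi/L : ℝ) : ℂ) * Complex.I)
            = ((L * (t0/L) : ℝ) : ℂ) + ((L * (Real.pi/L) : ℝ) : ℂ) * Complex.I := by
              push_cast; ring
          _ = ((t0:ℝ):ℂ) + ((Real.pi:ℝ):ℂ) * Complex.I := by rw [e1, e2]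
      rw [hLz, hmain Real.pi]
      rw [Real.cos_pi, Real.sin_pi, mul_zero, Complex.ofReal_zero, zero_mul, add_zero,
        hcosh]
      have hxx : c + r * (u * (-1)) = x := by
        have : r * (u * (-1)) = -d := by rw [← hru]; ring
        rw [this]; linarith [hdx]
      congr 1
      rw [← hxx]
      push_cast
      ring
end
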